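/- arXiv:1510.04984 — 2 statements merged into one kernel-verified Lean document; each statement's English description precedes it below -/
import Mathlib

section
/- A real square matrix L with zero column sums (𝟙ᵀL = 0), nonnegative diagonal entries and nonpositive off-diagonal entries satisfies xᵀ(L + Lᵀ)x ≥ 0 for all x if and only if L is balanced, i.e., L𝟙 = 0 as well. -/
open Matrix Finset

/-- A real square matrix `L` with zero column sums, nonnegative diagonal
entries and nonpositive off-diagonal entries satisfies `xᵀ(L + Lᵀ)x ≥ 0` for all `x`
if and only if `L` is balanced, i.e. `L 𝟙 = 0` as well. -/
theorem flowLaplacian_posSemidef_iff_balanced {n : ℕ} (L : Matrix (Fin n) (Fin n) ℝ)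
    (hcol : (1 : Fin n → ℝ) ᵥ* L = 0)
    (hdiag : ∀ i, 0 ≤ L i i)
    (hoff : ∀ i j, i ≠ j → L i j ≤ 0) :
    (∀ x : Fin n → ℝ, 0 ≤ x ⬝ᵥ ((L + Lᵀ) *ᵥ x)) ↔ L *ᵥ (1 : Fin n → ℝ) = 0 := by
  have hcolsum : ∀ j, ∑ i, L i j = 0 := by
    intro j
    have := congrFun hcol j
    simpa [vecMul, dotProduct] using this
  constructor
  · intro h
    set M := L + Lᵀ with hM
    have hMsym : Mᵀ = M := by
      simp [hM, Matrix.transpose_add, add_comm]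
    have hLt1 : Lᵀ *ᵥ (1 : Fin n → ℝ) = 0 := by
      ext i
      simpa [mulVec, dotProduct, Matrix.transpose_apply] using hcolsum i
    set v := L *ᵥ (1 : Fin n → ℝ) with hv
    have hM1 : M *ᵥ (1 : Fin n → ℝ) = v := by
      simp [hM, add_mulVec, hLt1, hv]
    have h11 : (1 : Fin n → ℝ) ⬝ᵥ v = 0 := by
      have e : (1 : Fin n → ℝ) ⬝ᵥ v = ∑ i, ∑ j, L i j := by
        simp [hv, dotProduct, mulVec]
      rw [e]; refine Finset.sum_comm.trans ?_
      simp [hcolsum]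
    have hsymdot : ∀ y : Fin n → ℝ, (1 : Fin n → ℝ) ⬝ᵥ (M *ᵥ y) = y ⬝ᵥ v := by
      intro y
      rw [Matrix.dotProduct_mulVec, ← Matrix.mulVec_transpose, hMsym, hM1,
        dotProduct_comm]
    set c := v ⬝ᵥ v with hc'
    set d := v ⬝ᵥ (M *ᵥ v) with hd'
    have hc : 0 ≤ c := by
      rw [hc']
      exact Finset.sum_nonneg fun i _ => mul_self_nonneg _
    have hd : 0 ≤ d := h v
    have key : ∀ t : ℝ, 0 ≤ 2 * t * c + t ^ 2 * d := by
      intro t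
      have hx := h ((1 : Fin n → ℝ) + t • v)
      have e1 : ((1 : Fin n → ℝ) + t • v) ⬝ᵥ (M *ᵥ ((1 : Fin n → ℝ) + t • v))
          = (1 : Fin n → ℝ) ⬝ᵥ (M *ᵥ (1 : Fin n → ℝ))
            + t * ((1 : Fin n → ℝ) ⬝ᵥ (M *ᵥ v))
            + t * (v ⬝ᵥ (M *ᵥ (1 : Fin n → ℝ))) + t * (t * (v ⬝ᵥ (M *ᵥ v))) := by
        rw [Matrix.mulVec_add, Matrix.mulVec_smul]
        simp only [add_dotProduct, dotProduct_add, smul_dotProduct,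
          dotProduct_smul, smul_eq_mul]
        ring
      rw [e1, hM1, h11, hsymdot v] at hx
      rw [← hc', ← hd'] at hx
      nlinarith [hx]
    have hd1 : (0:ℝ) < d + 1 := by linarith
    have ht := key (-(c / (d + 1)))
    have ht' : 0 ≤ (2 * (-(c / (d + 1))) * c + (-(c / (d + 1))) ^ 2 * d) * (d + 1) ^ 2 :=
      mul_nonneg ht (by positivity)
    have heq : (2 * (-(c / (d + 1))) * c + (-(c / (d + 1))) ^ 2 * d) * (d + 1) ^ 2
        = -2 * c ^ 2 * (d + 1) + c ^ 2 * d := by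
      field_simp
    rw [heq] at ht'
    have h1 : 0 ≤ c ^ 2 * d := mul_nonneg (sq_nonneg c) hd
    have hc0 : c = 0 := by nlinarith [sq_nonneg c]
    exact dotProduct_self_eq_zero.mp hc0
  · intro hbal x
    have hrow : ∀ i, ∑ j, L i j = 0 := by
      intro i
      have := congrFun hbal i
      simpa [mulVec, dotProduct] using this
    have lhs : x ⬝ᵥ ((L + Lᵀ) *ᵥ x)
        = (∑ i, ∑ j, x i * L i j * x j) + (∑ i, ∑ j, x i * L j i * x j) := by
      rw [← Finset.sum_add_distrib]
      simp only [dotProduct, mulVec, Matrix.add_apply, Matrix.transpose_apply, dotProduct,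
        Finset.mul_sum]
      apply Finset.sum_congr rfl; intro i _
      rw [← Finset.sum_add_distrib]
      apply Finset.sum_congr rfl; intro j _
      ring
    have swap : (∑ i, ∑ j, x i * L j i * x j) = ∑ i, ∑ j, x i * L i j * x j := by
      rw [Finset.sum_comm]
      apply Finset.sum_congr rfl; intro i _
      apply Finset.sum_congr rfl; intro j _
      ring
    have s1 : (∑ i, ∑ j, -(L i j * x i ^ 2)) = 0 := by
      apply Finset.sum_eq_zero; intro i _
      have : ∑ j, -(L i j * x i ^ 2) = -((∑ j, L i j) * x i ^ 2) := by
        rw [Finset.sum_mul, ← Finset.sum_neg_distrib]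
      rw [this, hrow i]; ring
    have s2 : (∑ i, ∑ j, -(L i j * x j ^ 2)) = 0 := by
      rw [Finset.sum_comm]
      apply Finset.sum_eq_zero; intro j _
      have : ∑ i, -(L i j * x j ^ 2) = -((∑ i, L i j) * x j ^ 2) := by
        rw [Finset.sum_mul, ← Finset.sum_neg_distrib]
      rw [this, hcolsum j]; ring
    have key : x ⬝ᵥ ((L + Lᵀ) *ᵥ x) = ∑ i, ∑ j, (-L i j) * (x i - x j) ^ 2 := by
      have rhs : ∑ i, ∑ j, (-L i j) * (x i - x j) ^ 2
          = (∑ i, ∑ j, -(L i j * x i ^ 2)) + (∑ i, ∑ j, -(L i j * x j ^ 2))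
            + (∑ i, ∑ j, 2 * (x i * L i j * x j)) := by
        rw [← Finset.sum_add_distrib, ← Finset.sum_add_distrib]
        apply Finset.sum_congr rfl; intro i _
        rw [← Finset.sum_add_distrib, ← Finset.sum_add_distrib]
        apply Finset.sum_congr rfl; intro j _
        ring
      rw [rhs, s1, s2, lhs, swap]
      rw [← Finset.sum_add_distrib]
      rw [zero_add, zero_add]
      apply Finset.sum_congr rfl; intro i _
      rw [← Finset.sum_add_distrib]
      apply Finset.sum_congr rfl; intro j _
      ring
    rw [key]
    apply Finset.sum_nonneg; intro i _
    apply Finset.sum_nonneg; intro j _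
    rcases eq_or_ne i j with rfl | hij
    · simp
    · exact mul_nonneg (by linarith [hoff i j hij]) (sq_nonneg _)
end

section
/- If each of N systems is passive with storage Sᵢ, L is a flow-Laplacian with Lσ = 0 for positive σ, and u = −Ly + v, then the weighted storage S^σ = Σᵢ (1/σᵢ)Sᵢ satisfies dS^σ/dt ≤ yᵀΣ⁻¹v, where Σ = diag(σ). -/
open Matrix Finset

lemma balanced_quad_nonneg {N : ℕ} (B : Matrix (Fin N) (Fin N) ℝ)
    (hrow : ∀ i, ∑ j, B i j = 0) (hcolz : ∀ j, ∑ i, B i j = 0)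
    (hoff : ∀ i j, i ≠ j → B i j ≤ 0) (z : Fin N → ℝ) :
    0 ≤ ∑ i, ∑ j, z i * B i j * z j := by
  have key : ∑ i, ∑ j, (-B i j) * (z i - z j)^2
      = 2 * ∑ i, ∑ j, z i * B i j * z j := by
    have e : ∀ i j : Fin N, (-B i j) * (z i - z j)^2
        = (2*(z i * B i j * z j) - B i j * (z i)^2) - B i j * (z j)^2 := by
      intro i j; ring
    simp_rw [e, Finset.sum_sub_distrib, ← Finset.mul_sum]
    have h1 : ∀ i : Fin N, ∑ j, B i j * (z i)^2 = 0 := by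
      intro i
      rw [← Finset.sum_mul, hrow i, zero_mul]
    have h2 : ∑ i : Fin N, ∑ j, B i j * (z j)^2 = 0 := by
      rw [Finset.sum_comm]
      refine Finset.sum_eq_zero fun j _ => ?_
      rw [← Finset.sum_mul, hcolz j, zero_mul]
    simp [h1, h2, Finset.mul_sum]
  have hnn : 0 ≤ ∑ i, ∑ j, (-B i j) * (z i - z j)^2 := by
    refine Finset.sum_nonneg fun i _ => Finset.sum_nonneg fun j _ => ?_
    rcases eq_or_ne i j with rfl | h
    · simp
    · have := hoff i j h
      have : 0 ≤ -B i j := by linarith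
      positivity
  linarith [key ▸ hnn]

/-- If each of `N` systems is passive with storage `Sᵢ`, `L` is a
flow-Laplacian with `L σ = 0` for positive `σ`, and `u = −L y + v`, then the weighted
storage `S^σ = Σᵢ (1/σᵢ) Sᵢ` satisfies `dS^σ/dt ≤ yᵀ Σ⁻¹ v`, where `Σ = diag σ`. -/
theorem weighted_interconnection_passive {N : ℕ} (L : Matrix (Fin N) (Fin N) ℝ)
    (hcol : (1 : Fin N → ℝ) ᵥ* L = 0)
    (hoff : ∀ i j, i ≠ j → L i j ≤ 0)
    (σ : Fin N → ℝ) (hσ : ∀ i, 0 < σ i) (hker : L *ᵥ σ = 0)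
    (S : Fin N → ℝ → ℝ) (y u v : ℝ → Fin N → ℝ)
    (hSpos : ∀ i t, 0 ≤ S i t)
    (hSdiff : ∀ i, Differentiable ℝ (S i))
    (hpassive : ∀ i t, deriv (S i) t ≤ y t i * u t i)
    (hinter : ∀ t, u t = -(L *ᵥ y t) + v t) :
    ∀ t, deriv (fun s => ∑ i, (1 / σ i) * S i s) t ≤
      y t ⬝ᵥ ((Matrix.diagonal σ)⁻¹ *ᵥ v t) := by
  intro t
  have hσne : ∀ i, σ i ≠ 0 := fun i => (hσ i).ne'
  -- derivative of the weighted sum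
  have hderiv : deriv (fun s => ∑ i, (1 / σ i) * S i s) t
      = ∑ i, (1 / σ i) * deriv (S i) t := by
    have h : HasDerivAt (fun s => ∑ i, (1 / σ i) * S i s)
        (∑ i, (1 / σ i) * deriv (S i) t) t := by
      refine HasDerivAt.fun_sum fun i _ => ?_
      exact ((hSdiff i t).hasDerivAt).const_mul _
    exact h.deriv
  rw [hderiv]
  -- inverse of diagonal
  have hinv : (Matrix.diagonal σ)⁻¹ = Matrix.diagonal (fun i => (σ i)⁻¹) := by
    apply Matrix.inv_eq_right_inv
    rw [Matrix.diagonal_mul_diagonal]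
    have : (fun i => σ i * (σ i)⁻¹) = fun _ => (1:ℝ) := by
      funext i; exact mul_inv_cancel₀ (hσne i)
    rw [this, Matrix.diagonal_one]
  -- quadratic form nonnegativity
  have hquad : 0 ≤ ∑ i, (1 / σ i) * (y t i * (L *ᵥ y t) i) := by
    have := balanced_quad_nonneg (fun i j => L i j * σ j)
      (fun i => by simpa [Matrix.mulVec, dotProduct] using congrFun hker i)
      (fun j => by
        have := congrFun hcol j
        simp only [Matrix.vecMul, dotProduct, Pi.one_apply, one_mul,
          Pi.zero_apply] at this
        simp [← Finset.sum_mul, this])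
      (fun i j h => mul_nonpos_of_nonpos_of_nonneg (hoff i j h) (hσ j).le)
      (fun i => y t i / σ i)
    refine le_trans this (le_of_eq ?_)
    refine Finset.sum_congr rfl fun i _ => ?_
    rw [Matrix.mulVec, dotProduct, Finset.mul_sum, Finset.mul_sum]
    refine Finset.sum_congr rfl fun j _ => ?_
    field_simp [hσne i, hσne j]
  -- main chain
  calc ∑ i, (1 / σ i) * deriv (S i) t
      ≤ ∑ i, (1 / σ i) * (y t i * u t i) := by
        refine Finset.sum_le_sum fun i _ => ?_
        exact mul_le_mul_of_nonneg_left (hpassive i t) (one_div_nonneg.mpr (hσ i).le)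
    _ ≤ y t ⬝ᵥ ((Matrix.diagonal σ)⁻¹ *ᵥ v t) := by
        rw [hinv]
        have : y t ⬝ᵥ (Matrix.diagonal (fun i => (σ i)⁻¹) *ᵥ v t)
            = ∑ i, (1 / σ i) * (y t i * v t i) := by
          simp [dotProduct, Matrix.mulVec_diagonal]
          exact Finset.sum_congr rfl fun i _ => by ring
        rw [this]
        have expand : ∑ i, (1 / σ i) * (y t i * u t i)
            = (∑ i, (1 / σ i) * (y t i * v t i))
              - ∑ i, (1 / σ i) * (y t i * (L *ᵥ y t) i) := by
          rw [← Finset.sum_sub_distrib]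
          refine Finset.sum_congr rfl fun i _ => ?_
          rw [hinter t]
          simp only [Pi.add_apply, Pi.neg_apply]
          ring
        rw [expand]
        linarith
end
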